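/- The coset mα + L, where α = (α_9, 2α_9, α_1) and L = A_9⊕A_9⊕A_1, has minimum squared norm at least 5 when m ≡ ±3 (mod 10) and exactly 3 when m ≡ ±1 or 5 (mod 10). -/

import Mathlib

noncomputable section

/-- The ambient space ℝ¹⁰ ⊕ ℝ¹⁰ ⊕ ℝ². -/
abbrev V : Type := (Fin 10 → ℝ) × (Fin 10 → ℝ) × (Fin 2 → ℝ)

/-- The standard inner product on ℝ¹⁰ ⊕ ℝ¹⁰ ⊕ ℝ². -/
def ip (x y : V) : ℝ :=
  (∑ t, x.1 t * y.1 t) + (∑ t, x.2.1 t * y.2.1 t) + (∑ t, x.2.2 t * y.2.2 t)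

/-- The root lattice A₉ ⊆ ℝ¹⁰. -/
def A9 : Set (Fin 10 → ℝ) := {x | (∀ i, ∃ z : ℤ, x i = (z : ℝ)) ∧ ∑ i, x i = 0}

/-- The root lattice A₁ ⊆ ℝ². -/
def A1 : Set (Fin 2 → ℝ) := {x | (∀ i, ∃ z : ℤ, x i = (z : ℝ)) ∧ ∑ i, x i = 0}

/-- The lattice L = A₉ ⊕ A₉ ⊕ A₁. -/
def Lset : Set V := {v | v.1 ∈ A9 ∧ v.2.1 ∈ A9 ∧ v.2.2 ∈ A1}

/-- α₉ = (1/10, …, 1/10, −9/10). -/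
def α9 : Fin 10 → ℝ := fun i => if (i : ℕ) = 9 then -(9 / 10) else 1 / 10

/-- α₁ = (1/2, −1/2). -/
def α1 : Fin 2 → ℝ := fun i => if (i : ℕ) = 1 then -(1 / 2) else 1 / 2

/-- α = (α₉, 2α₉, α₁). -/
def αvec : V := (α9, (2 : ℝ) • α9, α1)

/-- The overlattice Λ = L + ℤα. -/
def Λset : Set V := {v | ∃ m : ℤ, v - m • αvec ∈ Lset}

/-- The switching root r = (0, 0, 2α₁) = (0, 0, (1, −1)). -/
def rvec : V := (0, 0, (2 : ℝ) • α1)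

/- ### Auxiliary lemmas -/

lemma key {N : ℕ} (hN : 0 < N) (m' : ℤ) (c : Fin N → ℝ)
    (hz : ∀ i, ∃ z : ℤ, c i = (m' : ℝ) / N + z) (hs : ∑ i, c i = 0) :
    ((m' : ℝ) * (N - m')) / N ≤ ∑ i, (c i) ^ 2 := by
  choose w hw using hz
  have hNR : (0:ℝ) < N := by exact_mod_cast hN
  set t : ℝ := (m' : ℝ) / N with ht
  have hNt : (N : ℝ) * t = m' := by rw [ht]; field_simp [ht]
  have hsum : (∑ i, (w i : ℝ)) = -m' := by
    have h1 : ∑ i, c i = (N : ℝ) * t + ∑ i, (w i : ℝ) := by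
      simp only [hw]
      rw [Finset.sum_add_distrib, Finset.sum_const, Finset.card_univ, Fintype.card_fin,
        nsmul_eq_mul]
    rw [hs] at h1
    linarith [hNt]
  have hterm : ∀ i, t ^ 2 + (2 * t - 1) * (w i : ℝ) ≤ (c i) ^ 2 := by
    intro i
    rw [hw i]
    have h0 : (0:ℝ) ≤ (w i : ℝ) ^ 2 + (w i : ℝ) := by
      have : (0:ℤ) ≤ w i ^ 2 + w i := by nlinarith [sq_nonneg (w i), sq_nonneg (w i + 1)]
      exact_mod_cast this
    nlinarith
  have hsb : ∑ i, (t ^ 2 + (2 * t - 1) * (w i : ℝ)) ≤ ∑ i, (c i) ^ 2 :=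
    Finset.sum_le_sum fun i _ => hterm i
  have heq : ∑ i, (t ^ 2 + (2 * t - 1) * (w i : ℝ))
      = (N : ℝ) * t ^ 2 + (2 * t - 1) * (-m') := by
    rw [Finset.sum_add_distrib, Finset.sum_const, Finset.card_univ, Fintype.card_fin,
      nsmul_eq_mul, ← Finset.mul_sum, hsum]
  have hfin : ((m' : ℝ) * (N - m')) / N = (N : ℝ) * t ^ 2 + (2 * t - 1) * (-m') := by
    rw [ht]
    field_simp [ht]
    ring
  rw [hfin, ← heq]
  exact hsb

lemma sum_α9 : ∑ i, α9 i = 0 := by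
  simp [Fin.sum_univ_succ, α9]
  norm_num

lemma sum_α1 : ∑ i, α1 i = 0 := by
  simp [Fin.sum_univ_succ, α1]

lemma bound9 (m m' : ℤ) (hd : (10:ℤ) ∣ m - m') (c : Fin 10 → ℝ)
    (hz : ∀ i, ∃ z : ℤ, c i - (m : ℝ) * α9 i = z)
    (hs : ∑ i, (c i - (m : ℝ) * α9 i) = 0) :
    ((m' : ℝ) * (10 - m')) / 10 ≤ ∑ i, (c i) ^ 2 := by
  obtain ⟨k, hk⟩ := hd
  have hm : m = m' + 10 * k := by linarith
  have hkR : (m : ℝ) = (m' : ℝ) + 10 * (k : ℝ) := by exact_mod_cast hm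
  have h := key (N := 10) (by norm_num) m' c ?_ ?_
  · push_cast at h
    convert h using 2 <;> norm_num
  · intro i
    obtain ⟨z, hzi⟩ := hz i
    by_cases h9 : (i : ℕ) = 9
    · refine ⟨z - m' - 9 * k, ?_⟩
      have hα : α9 i = -(9/10) := by simp [α9, h9]
      rw [hα] at hzi
      push_cast
      linarith [hzi, hkR]
    · refine ⟨z + k, ?_⟩
      have hα : α9 i = 1/10 := by simp [α9, h9]
      rw [hα] at hzi
      push_cast
      linarith [hzi, hkR]
  · have h2 : ∑ i, (c i - (m:ℝ) * α9 i) = ∑ i, c i - (m:ℝ) * ∑ i, α9 i := by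
      rw [Finset.mul_sum, ← Finset.sum_sub_distrib]
    rw [h2, sum_α9] at hs
    linarith

lemma bound1 (m m' : ℤ) (hd : (2:ℤ) ∣ m - m') (c : Fin 2 → ℝ)
    (hz : ∀ i, ∃ z : ℤ, c i - (m : ℝ) * α1 i = z)
    (hs : ∑ i, (c i - (m : ℝ) * α1 i) = 0) :
    ((m' : ℝ) * (2 - m')) / 2 ≤ ∑ i, (c i) ^ 2 := by
  obtain ⟨k, hk⟩ := hd
  have hm : m = m' + 2 * k := by linarith
  have hkR : (m : ℝ) = (m' : ℝ) + 2 * (k : ℝ) := by exact_mod_cast hm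
  have h := key (N := 2) (by norm_num) m' c ?_ ?_
  · push_cast at h
    convert h using 2 <;> norm_num
  · intro i
    obtain ⟨z, hzi⟩ := hz i
    by_cases h1 : (i : ℕ) = 1
    · refine ⟨z - m' - k, ?_⟩
      have hα : α1 i = -(1/2) := by simp [α1, h1]
      rw [hα] at hzi
      push_cast
      linarith [hzi, hkR]
    · refine ⟨z + k, ?_⟩
      have hα : α1 i = 1/2 := by simp [α1, h1]
      rw [hα] at hzi
      push_cast
      linarith [hzi, hkR]
  · have h2 : ∑ i, (c i - (m:ℝ) * α1 i) = ∑ i, c i - (m:ℝ) * ∑ i, α1 i := by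
      rw [Finset.mul_sum, ← Finset.sum_sub_distrib]
    rw [h2, sum_α1] at hs
    linarith

lemma ip_self (v : V) :
    ip v v = (∑ t, (v.1 t) ^ 2) + (∑ t, (v.2.1 t) ^ 2) + (∑ t, (v.2.2 t) ^ 2) := by
  simp [ip, sq]

/-- General lower bound for the three components. -/
lemma lb (m m1 m2 m3 : ℤ) (h1 : (10:ℤ) ∣ m - m1) (h2 : (10:ℤ) ∣ 2 * m - m2)
    (h3 : (2:ℤ) ∣ m - m3) (v : V) (hv : v - m • αvec ∈ Lset) :
    ((m1:ℝ) * (10 - m1)) / 10 + ((m2:ℝ) * (10 - m2)) / 10 + ((m3:ℝ) * (2 - m3)) / 2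
      ≤ ip v v := by
  obtain ⟨⟨h1z, h1s⟩, ⟨h2z, h2s⟩, ⟨h3z, h3s⟩⟩ := hv
  simp only [αvec, Prod.fst_sub, Prod.snd_sub, Prod.smul_fst, Prod.smul_snd,
    Pi.sub_apply, Pi.smul_apply] at h1z h1s h2z h2s h3z h3s
  simp only [smul_eq_mul, zsmul_eq_mul] at h1z h1s h2z h2s h3z h3s
  have b1 := bound9 m m1 h1 v.1 h1z h1s
  have b2 : ((m2:ℝ) * (10 - m2)) / 10 ≤ ∑ t, (v.2.1 t) ^ 2 := by
    apply bound9 (2 * m) m2 h2 v.2.1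
    · intro i
      obtain ⟨z, hzi⟩ := h2z i
      refine ⟨z, ?_⟩
      push_cast
      push_cast at hzi
      linarith [hzi]
    · have heq : ∀ x : Fin 10, v.2.1 x - ((2 * m : ℤ) : ℝ) * α9 x
          = v.2.1 x - (m : ℝ) * (2 * α9 x) := by
        intro x; push_cast; ring
      rw [Finset.sum_congr rfl fun x _ => heq x]
      exact h2s
  have b3 := bound1 m m3 h3 v.2.2 h3z h3s
  rw [ip_self]
  linarith

/-- Membership helper for the existence part. -/
lemma mem_helper (m : ℤ) (a b : Fin 10 → ℝ) (c : Fin 2 → ℝ)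
    (h1 : ∀ i, ∃ z : ℤ, a i - (m : ℝ) * α9 i = z)
    (h1s : ∑ i, (a i - (m : ℝ) * α9 i) = 0)
    (h2 : ∀ i, ∃ z : ℤ, b i - (m : ℝ) * (2 * α9 i) = z)
    (h2s : ∑ i, (b i - (m : ℝ) * (2 * α9 i)) = 0)
    (h3 : ∀ i, ∃ z : ℤ, c i - (m : ℝ) * α1 i = z)
    (h3s : ∑ i, (c i - (m : ℝ) * α1 i) = 0) :
    ((a, b, c) : V) - m • αvec ∈ Lset := by
  refine ⟨⟨?_, ?_⟩, ⟨?_, ?_⟩, ?_, ?_⟩ <;>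
    simp only [αvec, Prod.fst_sub, Prod.snd_sub, Prod.smul_fst, Prod.smul_snd,
      Pi.sub_apply, Pi.smul_apply, smul_eq_mul, zsmul_eq_mul] <;>
    assumption

/-- The coset mα + L, where α = (α₉, 2α₉, α₁) and L = A₉⊕A₉⊕A₁, has minimum
squared norm at least 5 when m ≡ ±3 (mod 10) and exactly 3 when m ≡ ±1 or 5 (mod 10). -/
theorem stmt11 (m : ℤ) :
    ((Int.ModEq 10 m 3 ∨ Int.ModEq 10 m (-3)) →
      ∀ v : V, v - m • αvec ∈ Lset → 5 ≤ ip v v) ∧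
    ((Int.ModEq 10 m 1 ∨ Int.ModEq 10 m (-1) ∨ Int.ModEq 10 m 5) →
      (∀ v : V, v - m • αvec ∈ Lset → 3 ≤ ip v v) ∧
      (∃ v : V, v - m • αvec ∈ Lset ∧ ip v v = 3)) := by
  have hdc : ∀ a b : ℤ, Int.ModEq 10 a b → (10:ℤ) ∣ a - b := fun a b h =>
    dvd_sub_comm.mp h.dvd
  constructor
  · rintro (h | h) v hv
    · obtain ⟨k, hk⟩ := hdc m 3 h
      have := lb m 3 6 1 ⟨k, hk⟩ ⟨2 * k, by linarith⟩ ⟨5 * k + 1, by linarith⟩ v hv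
      push_cast at this
      linarith
    · obtain ⟨k, hk⟩ := hdc m (-3) h
      have := lb m 7 4 1 ⟨k - 1, by linarith⟩ ⟨2 * k - 1, by linarith⟩
        ⟨5 * k - 2, by linarith⟩ v hv
      push_cast at this
      linarith
  · intro h
    constructor
    · rcases h with h | h | h
      · obtain ⟨k, hk⟩ := hdc m 1 h
        intro v hv
        have := lb m 1 2 1 ⟨k, hk⟩ ⟨2 * k, by linarith⟩ ⟨5 * k, by linarith⟩ v hv
        push_cast at this
        linarith
      · obtain ⟨k, hk⟩ := hdc m (-1) h
        intro v hv
        have := lb m 9 8 1 ⟨k - 1, by linarith⟩ ⟨2 * k - 1, by linarith⟩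
          ⟨5 * k - 1, by linarith⟩ v hv
        push_cast at this
        linarith
      · obtain ⟨k, hk⟩ := hdc m 5 h
        intro v hv
        have := lb m 5 0 1 ⟨k, hk⟩ ⟨2 * k + 1, by linarith⟩ ⟨5 * k + 2, by linarith⟩ v hv
        push_cast at this
        linarith
    · rcases h with h | h | h
      · -- m = 10k + 1 : take v = (α9, b, α1)
        obtain ⟨k, hk⟩ := hdc m 1 h
        have hmR : (m : ℝ) = 10 * (k : ℝ) + 1 := by
          have : m = 10 * k + 1 := by linarith
          exact_mod_cast this
        refine ⟨(α9, fun i => if (i : ℕ) ≥ 8 then -(4/5) else (1/5 : ℝ), α1), ?_, ?_⟩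
        · apply mem_helper
          · intro i
            by_cases h9 : (i : ℕ) = 9
            · exact ⟨9 * k, by simp [α9, h9]; push_cast; linarith⟩
            · exact ⟨-k, by simp [α9, h9]; push_cast; linarith⟩
          · have : ∀ x : Fin 10, α9 x - (m : ℝ) * α9 x = (1 - (m:ℝ)) * α9 x := by
              intro x; ring
            rw [Finset.sum_congr rfl fun x _ => this x, ← Finset.mul_sum, sum_α9, mul_zero]
          · intro i
            by_cases h9 : (i : ℕ) = 9
            · exact ⟨18 * k + 1, by simp [α9, h9]; push_cast; linarith⟩
            · by_cases h8 : (i : ℕ) ≥ 8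
              · have : (i : ℕ) = 8 := by omega
                exact ⟨-(2 * k + 1), by simp [α9, this]; push_cast; linarith⟩
              · exact ⟨-(2 * k), by simp [α9, h9, h8]; push_cast; linarith⟩
          · simp [Fin.sum_univ_succ, α9]
            push_cast
            ring
          · intro i
            by_cases h1 : (i : ℕ) = 1
            · exact ⟨5 * k, by simp [α1, h1]; push_cast; linarith⟩
            · exact ⟨-(5 * k), by simp [α1, h1]; push_cast; linarith⟩
          · simp [Fin.sum_univ_succ, α1]
        · simp [ip, Fin.sum_univ_succ, α9, α1]
          norm_num
      · -- m = 10k - 1 : take v = (-α9, -b, α1)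
        obtain ⟨k, hk⟩ := hdc m (-1) h
        have hmR : (m : ℝ) = 10 * (k : ℝ) - 1 := by
          have : m = 10 * k - 1 := by linarith
          exact_mod_cast this
        refine ⟨(fun i => if (i : ℕ) = 9 then (9/10 : ℝ) else -(1/10),
            fun i => if (i : ℕ) ≥ 8 then (4/5 : ℝ) else -(1/5), α1), ?_, ?_⟩
        · apply mem_helper
          · intro i
            by_cases h9 : (i : ℕ) = 9
            · exact ⟨9 * k, by simp [α9, h9]; push_cast; linarith⟩
            · exact ⟨-k, by simp [α9, h9]; push_cast; linarith⟩
          · simp [Fin.sum_univ_succ, α9]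
            push_cast
            ring
          · intro i
            by_cases h9 : (i : ℕ) = 9
            · exact ⟨18 * k - 1, by simp [α9, h9]; push_cast; linarith⟩
            · by_cases h8 : (i : ℕ) ≥ 8
              · have : (i : ℕ) = 8 := by omega
                exact ⟨-(2 * k) + 1, by simp [α9, this]; push_cast; linarith⟩
              · exact ⟨-(2 * k), by simp [α9, h9, h8]; push_cast; linarith⟩
          · simp [Fin.sum_univ_succ, α9]
            push_cast
            ring
          · intro i
            by_cases h1 : (i : ℕ) = 1
            · exact ⟨5 * k - 1, by simp [α1, h1]; push_cast; linarith⟩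
            · exact ⟨-(5 * k) + 1, by simp [α1, h1]; push_cast; linarith⟩
          · simp [Fin.sum_univ_succ, α1]
        · simp [ip, Fin.sum_univ_succ, α1]
          norm_num
      · -- m = 10k + 5 : take v = (a5, 0, α1)
        obtain ⟨k, hk⟩ := hdc m 5 h
        have hmR : (m : ℝ) = 10 * (k : ℝ) + 5 := by
          have : m = 10 * k + 5 := by linarith
          exact_mod_cast this
        refine ⟨(fun i => if (i : ℕ) < 5 then (1/2 : ℝ) else -(1/2), 0, α1), ?_, ?_⟩
        · apply mem_helper
          · intro i
            by_cases h9 : (i : ℕ) = 9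
            · exact ⟨9 * k + 4, by simp [α9, h9]; push_cast; linarith⟩
            · by_cases h5 : (i : ℕ) < 5
              · exact ⟨-k, by simp [α9, h9, h5]; push_cast; linarith⟩
              · exact ⟨-(k + 1), by simp [α9, h9, h5]; push_cast; linarith⟩
          · simp [Fin.sum_univ_succ, α9]
            push_cast
            ring
          · intro i
            by_cases h9 : (i : ℕ) = 9
            · exact ⟨18 * k + 9, by simp [α9, h9]; push_cast; linarith⟩
            · exact ⟨-(2 * k + 1), by simp [α9, h9]; push_cast; linarith⟩
          · simp [Fin.sum_univ_succ, α9]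
            push_cast
            ring
          · intro i
            by_cases h1 : (i : ℕ) = 1
            · exact ⟨5 * k + 2, by simp [α1, h1]; push_cast; linarith⟩
            · exact ⟨-(5 * k + 2), by simp [α1, h1]; push_cast; linarith⟩
          · simp [Fin.sum_univ_succ, α1]
        · simp [ip, Fin.sum_univ_succ, α1]
          norm_num

end
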